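/- Let N and 𝒩 be positive integers. Let K be an invertible N×N complex matrix, M an invertible N×N complex matrix, and r an N×𝒩 complex matrix such that K·M·K† + M = r·r†, where K† denotes the conjugate transpose. Then det(I_𝒩 − r†·(K†)⁻¹·M⁻¹·K⁻¹·r) = (−1)^N / (det K · conj(det K)), i.e. the determinant equals (−1)^N divided by |det K|². -/

import Mathlib

open Matrix

theorem stmt_8 (N Nc : ℕ) (hN : 0 < N) (hNc : 0 < Nc)
    (K M : Matrix (Fin N) (Fin N) ℂ)
    (hK : IsUnit K.det) (hM : IsUnit M.det)
    (r : Matrix (Fin N) (Fin Nc) ℂ)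
    (hSyl : K * M * Kᴴ + M = r * rᴴ) :
    ((1 : Matrix (Fin Nc) (Fin Nc) ℂ) - rᴴ * (Kᴴ)⁻¹ * M⁻¹ * K⁻¹ * r).det
      = (-1) ^ N / (K.det * (starRingEnd ℂ) K.det) := by
  have hKH : IsUnit (Kᴴ).det := by
    rw [det_conjTranspose]; exact hK.star
  have h1 : ((1 : Matrix (Fin Nc) (Fin Nc) ℂ) - rᴴ * (Kᴴ)⁻¹ * M⁻¹ * K⁻¹ * r)
      = 1 + rᴴ * (-((Kᴴ)⁻¹ * M⁻¹ * K⁻¹ * r)) := by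
    rw [sub_eq_add_neg, Matrix.mul_neg]
    simp [Matrix.mul_assoc]
  have h2 : (1 + (-((Kᴴ)⁻¹ * M⁻¹ * K⁻¹ * r)) * rᴴ)
      = -((Kᴴ)⁻¹ * M⁻¹ * K⁻¹ * M) := by
    have hrr : (Kᴴ)⁻¹ * M⁻¹ * K⁻¹ * (r * rᴴ)
        = 1 + (Kᴴ)⁻¹ * M⁻¹ * K⁻¹ * M := by
      rw [← hSyl, Matrix.mul_add]
      congr 1
      calc (Kᴴ)⁻¹ * M⁻¹ * K⁻¹ * (K * M * Kᴴ)
          = (Kᴴ)⁻¹ * M⁻¹ * (K⁻¹ * K) * M * Kᴴ := by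
            simp only [Matrix.mul_assoc]
        _ = 1 := by
            rw [nonsing_inv_mul K hK, Matrix.mul_one,
              Matrix.mul_assoc Kᴴ⁻¹ M⁻¹ M, nonsing_inv_mul M hM, Matrix.mul_one,
              nonsing_inv_mul _ hKH]
    rw [Matrix.neg_mul, Matrix.mul_assoc, hrr]
    abel
  rw [h1, det_one_add_mul_comm, h2, det_neg]
  rw [det_mul, det_mul, det_mul, det_nonsing_inv, det_nonsing_inv, det_nonsing_inv,
    det_conjTranspose]
  have hk0 : K.det ≠ 0 := hK.ne_zero
  have hm0 : M.det ≠ 0 := hM.ne_zero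
  have hks0 : star K.det ≠ 0 := star_ne_zero.mpr hk0
  rw [Fintype.card_fin]
  have : (starRingEnd ℂ) K.det = star K.det := rfl
  rw [this]
  have hcs : (starRingEnd ℂ) K.det ≠ 0 := hks0
  simp only [Ring.inverse_eq_inv']
  field_simp
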